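/- A polynomial of the form Σ_{i=1}^m Σ_{j=1}^n c_{ij} w_i v_j in disjoint variables, whose coefficient matrix (c_{ij}) has rank ≥ 2, is irreducible in ℝ[w_1,…,w_m,v_1,…,v_n]. -/

import Mathlib

open MvPolynomial

lemma aux_deg_one {σ : Type*} [DecidableEq σ] (d : σ →₀ ℕ) (hd : d.degree = 1) :
    ∃ k, d = Finsupp.single k 1 := by
  have hd0 : d ≠ 0 := by
    intro h; rw [h, map_zero] at hd; exact one_ne_zero hd.symm
  obtain ⟨k, hk⟩ := Finsupp.ne_iff.mp hd0
  rw [Finsupp.zero_apply] at hk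
  refine ⟨k, ?_⟩
  have hkmem : k ∈ d.support := Finsupp.mem_support_iff.mpr hk
  have hle : d k ≤ d.degree := Finsupp.le_degree k d
  have hdk : d k = 1 := le_antisymm (hd ▸ hle) (Nat.one_le_iff_ne_zero.mpr hk)
  ext l
  rcases eq_or_ne l k with rfl | hlk
  · simp [hdk]
  · rw [Finsupp.single_apply, if_neg (by exact fun h => hlk h.symm)]
    by_contra hl
    have hlmem : l ∈ d.support := Finsupp.mem_support_iff.mpr hl
    have : d k + d l ≤ d.degree := by
      rw [Finsupp.degree]
      have hsub : ({k, l} : Finset σ) ⊆ d.support := by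
        intro x hx; simp at hx; rcases hx with rfl | rfl <;> assumption
      calc d k + d l = ∑ x ∈ ({k, l} : Finset σ), d x := by
            rw [Finset.sum_pair (fun h => hlk h.symm)]
        _ ≤ _ := Finset.sum_le_sum_of_subset hsub
    omega

lemma aux_rep {σ : Type*} [Fintype σ] [DecidableEq σ] {f : MvPolynomial σ ℝ}
    (hf : f.IsHomogeneous 1) :
    f = ∑ k : σ, C (coeff (Finsupp.single k 1) f) * X k := by
  ext d
  rw [coeff_sum]
  simp only [coeff_C_mul, coeff_X', mul_ite, mul_one, mul_zero]
  by_cases hd : d.degree = 1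
  · obtain ⟨k0, rfl⟩ := aux_deg_one d hd
    rw [Finset.sum_eq_single k0]
    · rw [if_pos rfl]
    · intro k _ hk
      rw [if_neg (by rwa [Finsupp.single_left_inj one_ne_zero])]
    · intro h; exact absurd (Finset.mem_univ k0) h
  · rw [hf.coeff_eq_zero hd, Finset.sum_eq_zero]
    intro k _
    rw [if_neg]
    intro h
    have : (Finsupp.single k 1 : σ →₀ ℕ).degree = 1 := by
      exact Finsupp.degree_single k 1
    exact hd (h ▸ this)

lemma aux_top_ne_zero {σ : Type*} {f : MvPolynomial σ ℝ} (hf : f ≠ 0) :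
    homogeneousComponent f.totalDegree f ≠ 0 := by
  obtain ⟨d, hd, hsup⟩ := f.support.exists_mem_eq_sup
    (Finset.nonempty_iff_ne_empty.mpr (support_eq_empty.not.mpr hf)) (fun d => d.sum fun _ n => n)
  have hdeg : d.degree = f.totalDegree := hsup.symm
  intro h0
  have := coeff_homogeneousComponent (σ := σ) (R := ℝ) f.totalDegree f d
  rw [h0, if_pos hdeg, coeff_zero] at this
  exact (mem_support_iff.mp hd) this.symm

lemma aux_sub_top_lt {σ : Type*} {f : MvPolynomial σ ℝ}
    (h : f - homogeneousComponent f.totalDegree f ≠ 0) :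
    (f - homogeneousComponent f.totalDegree f).totalDegree < f.totalDegree := by
  set r := f - homogeneousComponent f.totalDegree f with hr
  have key : ∀ d ∈ r.support, (d.sum fun _ n => n) < f.totalDegree := by
    intro d hd
    rw [mem_support_iff, hr, coeff_sub] at hd
    have hcoef := coeff_homogeneousComponent (σ := σ) (R := ℝ) f.totalDegree f d
    by_cases hda : d.degree = f.totalDegree
    · rw [hcoef, if_pos hda, sub_self] at hd; exact absurd rfl hd
    · rw [hcoef, if_neg hda, sub_zero] at hd
      have hle : (d.sum fun _ n => n) ≤ f.totalDegree := le_totalDegree (mem_support_iff.mpr hd)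
      have : (d.sum fun _ n => n) = d.degree := rfl
      omega
  have hpos : 0 < f.totalDegree := by
    obtain ⟨d, hd⟩ := Finset.nonempty_iff_ne_empty.mpr (support_eq_empty.not.mpr h)
    exact lt_of_le_of_lt (Nat.zero_le _) (key d hd)
  rw [totalDegree]
  exact (Finset.sup_lt_iff hpos).mpr key

lemma aux_top_mul {σ : Type*} (f g : MvPolynomial σ ℝ) :
    homogeneousComponent (f.totalDegree + g.totalDegree) (f * g)
      = homogeneousComponent f.totalDegree f * homogeneousComponent g.totalDegree g := by
  set a := f.totalDegree
  set b := g.totalDegree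
  set Tf := homogeneousComponent a f with hTf
  set Tg := homogeneousComponent b g with hTg
  have hTfh : Tf.IsHomogeneous a := homogeneousComponent_isHomogeneous a f
  have hTgh : Tg.IsHomogeneous b := homogeneousComponent_isHomogeneous b g
  have expand : f * g = Tf * Tg + (Tf * (g - Tg) + (f - Tf) * g) := by ring
  have h1 : homogeneousComponent (a + b) (Tf * Tg) = Tf * Tg := by
    rw [homogeneousComponent_of_mem ((mem_homogeneousSubmodule _ _).mpr (hTfh.mul hTgh)),
      if_pos rfl]
  have h2 : homogeneousComponent (a + b) (Tf * (g - Tg)) = 0 := by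
    rcases eq_or_ne (g - Tg) 0 with h | h
    · rw [h, mul_zero, map_zero]
    · apply homogeneousComponent_eq_zero
      calc (Tf * (g - Tg)).totalDegree ≤ Tf.totalDegree + (g - Tg).totalDegree :=
            totalDegree_mul _ _
        _ < a + b := by
            have h5 := hTfh.totalDegree_le
            have h6 := aux_sub_top_lt h
            rw [← hTg] at h6
            omega
  have h3 : homogeneousComponent (a + b) ((f - Tf) * g) = 0 := by
    rcases eq_or_ne (f - Tf) 0 with h | h
    · rw [h, zero_mul, map_zero]
    · apply homogeneousComponent_eq_zero
      calc ((f - Tf) * g).totalDegree ≤ (f - Tf).totalDegree + g.totalDegree :=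
            totalDegree_mul _ _
        _ < a + b := by
            have h6 := aux_sub_top_lt h
            rw [← hTf] at h6
            omega
  rw [expand, map_add, map_add, h1, h2, h3, add_zero, add_zero]

lemma aux_rank_le_one {m n : ℕ} (c : Matrix (Fin m) (Fin n) ℝ) (u : Fin m → ℝ) (v : Fin n → ℝ)
    (h : ∀ i j, c i j = u i * v j) : c.rank ≤ 1 := by
  have hle : LinearMap.range c.mulVecLin ≤ Submodule.span ℝ {u} := by
    rintro y ⟨x, rfl⟩
    rw [Submodule.mem_span_singleton]
    refine ⟨∑ j, v j * x j, ?_⟩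
    funext i
    simp only [Matrix.mulVecLin_apply, Matrix.mulVec, dotProduct, Pi.smul_apply,
      smul_eq_mul, Finset.sum_mul]
    exact Finset.sum_congr rfl fun j _ => by rw [h i j]; ring
  calc c.rank = Module.finrank ℝ (LinearMap.range c.mulVecLin) := rfl
    _ ≤ Module.finrank ℝ (Submodule.span ℝ {u}) := Submodule.finrank_mono hle
    _ ≤ 1 := by
        rcases eq_or_ne u 0 with rfl | hu
        · rw [Set.singleton_zero, Submodule.span_zero]
          simp
        · rw [finrank_span_singleton hu]

lemma aux_zeros {ι : Type*} (α γ : ι → ℝ) (hR1 : ∀ i, α i * γ i = 0)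
    (hR3 : ∀ i i', (α i + α i') * (γ i + γ i') = 0) :
    (∀ i, α i = 0) ∨ (∀ i, γ i = 0) := by
  by_contra h
  push_neg at h
  obtain ⟨⟨i, hi⟩, ⟨i', hi'⟩⟩ := h
  have e1 : α i * γ i' + α i' * γ i = 0 := by
    linear_combination hR3 i i' - hR1 i - hR1 i'
  have e2 : (α i * γ i') ^ 2 = 0 := by
    linear_combination (α i * γ i') * e1 - (α i' * γ i') * hR1 i
  have e3 : α i * γ i' = 0 := by
    exact pow_eq_zero_iff two_ne_zero |>.mp e2
  rcases mul_eq_zero.mp e3 with h' | h'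
  · exact hi h'
  · exact hi' h'

theorem stmt_11 (m n : ℕ) (c : Matrix (Fin m) (Fin n) ℝ) (hrank : 2 ≤ c.rank) :
    Irreducible (∑ i, ∑ j, C (c i j) * X (Sum.inl i) * X (Sum.inr j) :
      MvPolynomial (Fin m ⊕ Fin n) ℝ) := by
  set p : MvPolynomial (Fin m ⊕ Fin n) ℝ :=
    ∑ i, ∑ j, C (c i j) * X (Sum.inl i) * X (Sum.inr j) with hpdef
  have heval : ∀ x : Fin m ⊕ Fin n → ℝ,
      eval x p = ∑ i, ∑ j, c i j * x (Sum.inl i) * x (Sum.inr j) := by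
    intro x
    rw [hpdef]
    simp [map_sum]
  have hp2 : p.IsHomogeneous 2 := by
    rw [hpdef]
    apply IsHomogeneous.sum
    intro i _
    apply IsHomogeneous.sum
    intro j _
    have h1 := ((isHomogeneous_X ℝ (Sum.inl i : Fin m ⊕ Fin n)).mul
      (isHomogeneous_X ℝ (Sum.inr j : Fin m ⊕ Fin n))).C_mul (c i j)
    simpa [mul_assoc] using h1
  have hcne : ∃ i j, c i j ≠ 0 := by
    by_contra h
    push_neg at h
    have hc0 : c = 0 := by ext i j; exact h i j
    rw [hc0, Matrix.rank_zero] at hrank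
    omega
  have hp0 : p ≠ 0 := by
    obtain ⟨i, j, hij⟩ := hcne
    intro h
    apply hij
    have hev := heval (Sum.elim (Pi.single i 1) (Pi.single j 1))
    rw [h, map_zero] at hev
    simp only [Sum.elim_inl, Sum.elim_inr, Pi.single_apply, mul_ite, ite_mul, mul_one, mul_zero,
      zero_mul, Finset.sum_ite_eq', Finset.mem_univ, if_pos] at hev
    exact hev.symm
  constructor
  · -- p is not a unit
    intro hu
    obtain ⟨q, hq⟩ := hu.exists_right_inv
    have hq0 : q ≠ 0 := by rintro rfl; rw [mul_zero] at hq; exact one_ne_zero hq.symm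
    have htm := aux_top_mul p q
    rw [hq] at htm
    have hz : homogeneousComponent (p.totalDegree + q.totalDegree)
        (1 : MvPolynomial (Fin m ⊕ Fin n) ℝ) = 0 := by
      apply homogeneousComponent_eq_zero
      rw [totalDegree_one]
      have : p.totalDegree = 2 := hp2.totalDegree hp0
      omega
    rw [hz] at htm
    rcases mul_eq_zero.mp htm.symm with h' | h'
    · exact aux_top_ne_zero hp0 h'
    · exact aux_top_ne_zero hq0 h'
  · -- factors
    intro f g hfg
    by_contra hcon
    push_neg at hcon
    obtain ⟨hfu, hgu⟩ := hcon
    have hf0 : f ≠ 0 := by rintro rfl; rw [zero_mul] at hfg; exact hp0 hfg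
    have hg0 : g ≠ 0 := by rintro rfl; rw [mul_zero] at hfg; exact hp0 hfg
    have htm := aux_top_mul f g
    rw [← hfg] at htm
    have hcp : homogeneousComponent (f.totalDegree + g.totalDegree) p
        = if f.totalDegree + g.totalDegree = 2 then p else 0 :=
      homogeneousComponent_of_mem ((mem_homogeneousSubmodule _ _).mpr hp2)
    have hsum2 : f.totalDegree + g.totalDegree = 2 := by
      by_contra hne
      rw [hcp, if_neg hne] at htm
      exact mul_ne_zero (aux_top_ne_zero hf0) (aux_top_ne_zero hg0) htm.symm
    -- neither degree is zero, else it would be a unit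
    have hdeg_ne : ∀ h : MvPolynomial (Fin m ⊕ Fin n) ℝ, h ≠ 0 → h.totalDegree = 0 → IsUnit h := by
      intro h hh0 hh
      have hhom : h.IsHomogeneous 0 := (totalDegree_zero_iff_isHomogeneous (p := h)).mp hh
      have hC : h = C (coeff 0 h) := by
        have := homogeneousComponent_of_mem (m := 0) ((mem_homogeneousSubmodule _ _).mpr hhom)
        rw [if_pos rfl] at this
        conv_lhs => rw [← this, homogeneousComponent_zero]
      have hr0 : coeff 0 h ≠ 0 := by
        intro hr; rw [hr, map_zero] at hC; exact hh0 hC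
      rw [hC]
      exact IsUnit.of_mul_eq_one (C (coeff 0 h)⁻¹)
        (by rw [← C_mul, mul_inv_cancel₀ hr0, C_1])
    have hdf : f.totalDegree = 1 := by
      rcases Nat.lt_or_ge f.totalDegree 1 with h | h
      · exact absurd (hdeg_ne f hf0 (by omega)) hfu
      · rcases Nat.lt_or_ge g.totalDegree 1 with h' | h'
        · exact absurd (hdeg_ne g hg0 (by omega)) hgu
        · omega
    have hdg : g.totalDegree = 1 := by omega
    rw [hcp, if_pos hsum2, hdf, hdg] at htm
    set Tf := homogeneousComponent 1 f with hTfdef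
    set Tg := homogeneousComponent 1 g with hTgdef
    have hTf1 : Tf.IsHomogeneous 1 := homogeneousComponent_isHomogeneous 1 f
    have hTg1 : Tg.IsHomogeneous 1 := homogeneousComponent_isHomogeneous 1 g
    have hTf0 : Tf ≠ 0 := by rw [hTfdef, ← hdf]; exact aux_top_ne_zero hf0
    have hTg0 : Tg ≠ 0 := by rw [hTgdef, ← hdg]; exact aux_top_ne_zero hg0
    -- p = Tf * Tg
    have hfg2 : p = Tf * Tg := htm
    set α : Fin m → ℝ := fun i => coeff (Finsupp.single (Sum.inl i) 1) Tf with hα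
    set β : Fin n → ℝ := fun j => coeff (Finsupp.single (Sum.inr j) 1) Tf with hβ
    set γ : Fin m → ℝ := fun i => coeff (Finsupp.single (Sum.inl i) 1) Tg with hγ
    set δ : Fin n → ℝ := fun j => coeff (Finsupp.single (Sum.inr j) 1) Tg with hδ
    have master : ∀ (y : Fin m → ℝ) (z : Fin n → ℝ),
        (∑ i, α i * y i + ∑ j, β j * z j) * (∑ i, γ i * y i + ∑ j, δ j * z j)
          = ∑ i, ∑ j, c i j * y i * z j := by
      intro y z
      have h := congrArg (eval (Sum.elim y z)) hfg2
      rw [map_mul, heval] at h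
      have e1 : eval (Sum.elim y z) Tf = ∑ i, α i * y i + ∑ j, β j * z j := by
        conv_lhs => rw [aux_rep hTf1]
        rw [map_sum, Fintype.sum_sum_type]
        simp only [map_mul, eval_C, eval_X, Sum.elim_inl, Sum.elim_inr]
        rfl
      have e2 : eval (Sum.elim y z) Tg = ∑ i, γ i * y i + ∑ j, δ j * z j := by
        conv_lhs => rw [aux_rep hTg1]
        rw [map_sum, Fintype.sum_sum_type]
        simp only [map_mul, eval_C, eval_X, Sum.elim_inl, Sum.elim_inr]
        rfl
      rw [e1, e2] at h
      simp only [Sum.elim_inl, Sum.elim_inr] at h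
      exact h.symm
    have hR1 : ∀ i, α i * γ i = 0 := by
      intro i
      have h := master (Pi.single i 1) 0
      simpa [Pi.single_apply, mul_ite, ite_mul, Finset.sum_ite_eq'] using h
    have hR2 : ∀ j, β j * δ j = 0 := by
      intro j
      have h := master 0 (Pi.single j 1)
      simpa [Pi.single_apply, mul_ite, ite_mul, Finset.sum_ite_eq'] using h
    have hR3 : ∀ i i', (α i + α i') * (γ i + γ i') = 0 := by
      intro i i'
      rcases eq_or_ne i i' with rfl | hii
      · have h := hR1 i; nlinarith [hR1 i]
      · have h := master (Pi.single i 1 + Pi.single i' 1) 0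
        simp only [Pi.add_apply, Pi.single_apply, Pi.zero_apply, mul_add, mul_ite, mul_one,
          mul_zero, Finset.sum_add_distrib, Finset.sum_ite_eq', Finset.mem_univ, if_true,
          ite_self, Finset.sum_const_zero, add_zero, zero_add, zero_mul] at h
        linarith [h]
    have hR4 : ∀ j j', (β j + β j') * (δ j + δ j') = 0 := by
      intro j j'
      rcases eq_or_ne j j' with rfl | hjj
      · nlinarith [hR2 j]
      · have h := master 0 (Pi.single j 1 + Pi.single j' 1)
        simp only [Pi.add_apply, Pi.single_apply, Pi.zero_apply, mul_add, mul_ite, mul_one,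
          mul_zero, Finset.sum_add_distrib, Finset.sum_ite_eq', Finset.mem_univ, if_true,
          ite_self, Finset.sum_const_zero, add_zero, zero_add, zero_mul] at h
        linarith [h]
    have hR5 : ∀ i j, (α i + β j) * (γ i + δ j) = c i j := by
      intro i j
      have h := master (Pi.single i 1) (Pi.single j 1)
      simpa [Pi.single_apply, mul_ite, ite_mul, Finset.sum_ite_eq'] using h
    have hc5 : ∀ i j, c i j = α i * δ j + β j * γ i := by
      intro i j
      linear_combination - hR5 i j + hR1 i + hR2 j
    have hz1 : (∀ i, α i = 0) ∨ (∀ i, γ i = 0) := aux_zeros α γ hR1 hR3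
    have hz2 : (∀ j, β j = 0) ∨ (∀ j, δ j = 0) := aux_zeros β δ hR2 hR4
    -- a linear form with all coefficients zero is zero
    have hlin : ∀ (T : MvPolynomial (Fin m ⊕ Fin n) ℝ), T.IsHomogeneous 1 →
        (∀ i, coeff (Finsupp.single (Sum.inl i) 1) T = 0) →
        (∀ j, coeff (Finsupp.single (Sum.inr j) 1) T = 0) → T = 0 := by
      intro T hT h1 h2
      rw [aux_rep hT, Finset.sum_eq_zero]
      rintro (i | j) _
      · rw [h1 i, map_zero, zero_mul]
      · rw [h2 j, map_zero, zero_mul]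
    have hrank1 : c.rank ≤ 1 := by
      rcases hz1 with hα0 | hγ0
      · rcases hz2 with hβ0 | hδ0
        · exact absurd (hlin Tf hTf1 hα0 hβ0) hTf0
        · apply aux_rank_le_one c γ β
          intro i j
          rw [hc5 i j, hα0 i, hδ0 j]
          ring
      · rcases hz2 with hβ0 | hδ0
        · apply aux_rank_le_one c α δ
          intro i j
          rw [hc5 i j, hγ0 i, hβ0 j]
          ring
        · exact absurd (hlin Tg hTg1 hγ0 hδ0) hTg0
    omega
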